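/- Fix d ∈ ℕ and n ∈ ℕ, and let φ : (B^d)^n → ℝ be a bounded measurable function, where B^d is the closed unit ball in ℝ^d. Then the function I(z) = ∫_{(B^d)^n} φ(x₁,…,xₙ)·∏_{i=1}^{n} f_{d,z}(x_i) dx₁…dxₙ, where f_{d,z}(x) = (Γ(d/2+z+1)/(π^{d/2}Γ(z+1)))·(1-‖x‖²)^z, is analytic (holomorphic) on the half-plane {z ∈ ℂ : Re z > -1}. -/

import Mathlib

open MeasureTheory Real Metric Set

lemma oneD {s : ℝ} (hs : -1 < s) (m : ℕ) :
    IntegrableOn (fun r : ℝ => (if r < 1 then (1 - r^2) ^ s else 0) * r ^ m) (Set.Ioi 0) := by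
  set t := min s 0 with htdef
  have ht : -1 < t := lt_min hs (by norm_num)
  have ht0 : t ≤ 0 := min_le_right _ _
  have hts : t ≤ s := min_le_left _ _
  have h1 : IntegrableOn (fun r : ℝ => (1 - r) ^ t) (Set.Ioc 0 1) := by
    have h := ((intervalIntegral.intervalIntegrable_rpow' (a := 0) (b := 1) ht).comp_sub_left 1).symm
    simp only [sub_zero, sub_self] at h
    rwa [intervalIntegrable_iff_integrableOn_Ioc_of_le (by norm_num)] at h
  have hbound : Integrable ((Set.Ioc (0:ℝ) 1).indicator (fun r => (1 - r) ^ t)) :=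
    (integrable_indicator_iff measurableSet_Ioc).2 h1
  have hmeas : Measurable (fun r : ℝ => (if r < 1 then (1 - r^2) ^ s else 0) * r ^ m) := by
    apply Measurable.mul _ (measurable_id.pow_const m)
    apply Measurable.ite (measurableSet_lt measurable_id measurable_const) _ measurable_const
    fun_prop
  refine Integrable.mono' hbound.integrableOn hmeas.aestronglyMeasurable ?_
  filter_upwards [ae_restrict_mem measurableSet_Ioi] with r hr
  rcases lt_or_ge r 1 with h | h
  · have hr0 : (0:ℝ) < r := hr
    have h2 : (0:ℝ) < 1 - r^2 := by nlinarith
    rw [if_pos h, Set.indicator_of_mem (show r ∈ Set.Ioc (0:ℝ) 1 from ⟨hr0, h.le⟩) (fun r => (1 - r) ^ t)]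
    have e1 : (1 - r^2) ^ s ≤ (1 - r^2) ^ t := rpow_le_rpow_of_exponent_ge h2 (by nlinarith) hts
    have e2 : (1 - r^2) ^ t ≤ (1 - r) ^ t :=
      rpow_le_rpow_of_nonpos (by linarith) (by nlinarith) ht0
    have e3 : r ^ m ≤ 1 := pow_le_one₀ hr0.le h.le
    rw [Real.norm_eq_abs, abs_of_nonneg (mul_nonneg (rpow_nonneg h2.le _) (pow_nonneg hr0.le _))]
    calc (1 - r^2) ^ s * r ^ m ≤ (1 - r^2) ^ s * 1 :=
          mul_le_mul_of_nonneg_left e3 (rpow_nonneg h2.le _)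
      _ = (1 - r^2) ^ s := mul_one _
      _ ≤ (1 - r) ^ t := e1.trans e2
  · rw [if_neg (not_lt.2 h), zero_mul, norm_zero]
    exact indicator_nonneg (fun x hx => rpow_nonneg (by linarith [hx.2]) _) r

lemma logBound {δ R : ℝ} (hδ : 0 < δ) (h0 : 0 < R) (h1 : R ≤ 1) :
    |Real.log R| ≤ R ^ (-δ) / δ := by
  have hlog : Real.log R ≤ 0 := Real.log_nonpos h0.le h1
  rw [abs_of_nonpos hlog]
  rw [le_div_iff₀ hδ]
  have h2 : Real.log (R ^ (-δ)) ≤ R ^ (-δ) - 1 :=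
    Real.log_le_sub_one_of_pos (Real.rpow_pos_of_pos h0 _)
  rw [Real.log_rpow h0] at h2
  nlinarith [Real.rpow_pos_of_pos h0 (-δ)]


lemma prodBound {n : ℕ} (G G' W : Fin n → ℝ) (C K : ℝ) (hC : 0 ≤ C) (hK : 0 ≤ K)
    (hW : ∀ i, 0 ≤ W i) (hG : ∀ i, 0 ≤ G i)
    (hG' : ∀ i, 0 ≤ G' i) (hGW : ∀ i, G i ≤ C * W i) (hG'W : ∀ i, G' i ≤ K * W i) (i : Fin n) :
    (∏ j ∈ Finset.univ.erase i, G j) * G' i ≤ (max C 1)^n * K * ∏ j, W j := by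
  have hC1 : (1:ℝ) ≤ max C 1 := le_max_right _ _
  have key : ∏ j ∈ Finset.univ.erase i, G j ≤
      (max C 1)^n * ∏ j ∈ Finset.univ.erase i, W j := by
    calc ∏ j ∈ Finset.univ.erase i, G j ≤ ∏ j ∈ Finset.univ.erase i, (C * W j) :=
          Finset.prod_le_prod (fun j _ => hG j) (fun j _ => hGW j)
      _ = C ^ (Finset.univ.erase i).card * ∏ j ∈ Finset.univ.erase i, W j := by
          rw [Finset.prod_mul_distrib, Finset.prod_const]
      _ ≤ (max C 1)^n * ∏ j ∈ Finset.univ.erase i, W j := by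
          apply mul_le_mul_of_nonneg_right _ (Finset.prod_nonneg fun j _ => hW j)
          calc C ^ (Finset.univ.erase i).card ≤ (max C 1) ^ (Finset.univ.erase i).card :=
                pow_le_pow_left₀ hC (le_max_left _ _) _
            _ ≤ (max C 1)^n := by
                apply pow_le_pow_right₀ hC1
                calc (Finset.univ.erase i).card ≤ Finset.univ.card := Finset.card_erase_le ..
                  _ = n := by simp
  calc (∏ j ∈ Finset.univ.erase i, G j) * G' i
      ≤ ((max C 1)^n * ∏ j ∈ Finset.univ.erase i, W j) * (K * W i) := by
        exact mul_le_mul key (hG'W i) (hG' i)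
          (mul_nonneg (by positivity) (Finset.prod_nonneg fun j _ => hW j))
      _ = (max C 1)^n * K * ∏ j, W j := by
        rw [mul_mul_mul_comm, Finset.prod_erase_mul Finset.univ W (Finset.mem_univ i)]

lemma prodBound0 {n : ℕ} (G W : Fin n → ℝ) (C : ℝ) (hC : 0 ≤ C)
    (hW : ∀ i, 0 ≤ W i) (hG : ∀ i, 0 ≤ G i) (hGW : ∀ i, G i ≤ C * W i) :
    ∏ j, G j ≤ (max C 1)^n * ∏ j, W j := by
  calc ∏ j, G j ≤ ∏ j, (C * W j) := Finset.prod_le_prod (fun j _ => hG j) (fun j _ => hGW j)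
    _ = C ^ n * ∏ j, W j := by
        rw [Finset.prod_mul_distrib, Finset.prod_const, Finset.card_univ, Fintype.card_fin]
    _ ≤ (max C 1)^n * ∏ j, W j := by
        apply mul_le_mul_of_nonneg_right (pow_le_pow_left₀ hC (le_max_left _ _) _)
          (Finset.prod_nonneg fun j _ => hW j)


lemma ballInt_aux {d : ℕ} {s : ℝ} (hs : -1 < s) :
    Integrable (fun y : EuclideanSpace ℝ (Fin d) =>
      if ‖y‖ < 1 then (1 - ‖y‖^2) ^ s else 0) := by
  set E := EuclideanSpace ℝ (Fin d)
  set w : ℝ → ℝ := fun r => if r < 1 then (1 - r^2) ^ s else 0 with hw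
  have hwmeas : Measurable w := by
    apply Measurable.ite (measurableSet_lt measurable_id measurable_const) _ measurable_const
    fun_prop
  rcases Nat.eq_zero_or_pos d with hd | hd
  · subst hd
    have hfin : (volume : Measure E) Set.univ = 1 := by
      have h := (EuclideanSpace.volume_preserving_symm_measurableEquiv_toLp
        (ι := Fin 0)).measure_preimage MeasurableSet.univ.nullMeasurableSet
      rw [Set.preimage_univ] at h
      rw [h]; simp [volume_pi, Measure.pi_univ]
    have heq : (fun y : E => if ‖y‖ < 1 then (1 - ‖y‖^2) ^ s else 0) = fun _ => (1:ℝ) := by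
      funext y
      have : y = 0 := Subsingleton.elim y 0
      simp [this]
    rw [heq, integrable_const_iff]
    right; exact ⟨by rw [hfin]; exact ENNReal.one_lt_top⟩
  · haveI : Nontrivial E := by
      apply Module.nontrivial_of_finrank_pos (R := ℝ)
      rw [finrank_euclideanSpace_fin]; exact hd
    show Integrable (fun y : E => w ‖y‖)
    rw [← restrict_compl_singleton (μ := (volume : Measure E)) (0:E),
      ← map_comap_subtype_coe (measurableSet_singleton (0:E)).compl,
      (MeasurableEmbedding.subtype_coe (measurableSet_singleton (0:E)).compl).integrable_map_iff]
    have key := (volume : Measure E).measurePreserving_homeomorphUnitSphereProd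
    have hcomp : ((fun y : E => w ‖y‖) ∘ (Subtype.val : ({0}ᶜ : Set E) → E))
        = (fun p : (sphere (0:E) 1) × (Set.Ioi (0:ℝ)) => w p.2.1) ∘
          (homeomorphUnitSphereProd E) := by
      funext x
      simp [Function.comp]
    rw [hcomp, key.integrable_comp_emb (Homeomorph.measurableEmbedding _)]
    -- now product measure
    have hν : Integrable (fun r : (Set.Ioi (0:ℝ)) => w r.1)
        (Measure.volumeIoiPow (Module.finrank ℝ E - 1)) := by
      rw [Measure.volumeIoiPow, integrable_withDensity_iff (by fun_prop)
        (Filter.Eventually.of_forall fun x => ENNReal.ofReal_lt_top)]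
      have : (fun r : (Set.Ioi (0:ℝ)) => w r.1 * (ENNReal.ofReal (r.1 ^ (Module.finrank ℝ E - 1))).toReal)
          = (fun r : ℝ => w r * r ^ (Module.finrank ℝ E - 1)) ∘ (Subtype.val) := by
        funext r
        simp [ENNReal.toReal_ofReal (pow_nonneg (le_of_lt r.2) _)]
      rw [this, ← (MeasurableEmbedding.subtype_coe measurableSet_Ioi).integrable_map_iff,
        map_comap_subtype_coe measurableSet_Ioi]
      exact oneD hs _
    rw [integrable_prod_iff]
    · constructor
      · exact Filter.Eventually.of_forall fun x => hν
      · exact (integrable_const (∫ (y : ↑(Set.Ioi (0:ℝ))), ‖w ↑y‖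
            ∂(Measure.volumeIoiPow (Module.finrank ℝ E - 1))) :
          Integrable (fun _ : (sphere (0:E) 1) => _) volume.toSphere)
    · exact (hwmeas.comp (continuous_subtype_val.measurable.comp measurable_snd)).aestronglyMeasurable

/-- Analytic continuation lemma: for a bounded measurable `φ : (B^d)^n → ℝ`, the function
`I(z) = ∫_{(B^d)^n} φ(x₁,…,xₙ) ∏ᵢ f_{d,z}(xᵢ) dx` (with
`f_{d,z}(x) = (Γ(d/2+z+1)/(π^{d/2}Γ(z+1)))(1-‖x‖²)^z` for `‖x‖<1`, zero otherwise)
is holomorphic on the half-plane `Re z > -1`. -/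
theorem I_analytic (d n : ℕ)
    (φ : (Fin n → EuclideanSpace ℝ (Fin d)) → ℝ)
    (hφ_meas : Measurable φ) (hφ_bdd : ∃ M : ℝ, ∀ x, |φ x| ≤ M)
    (I : ℂ → ℂ)
    (hI : ∀ z : ℂ, I z = ∫ x in Set.univ.pi
        (fun _ : Fin n => Metric.closedBall (0 : EuclideanSpace ℝ (Fin d)) 1),
      (φ x : ℂ) * ∏ i : Fin n,
        (if ‖x i‖ < 1 then
          (Complex.Gamma ((d : ℂ) / 2 + z + 1) /
              ((Real.pi : ℂ) ^ ((d : ℂ) / 2) * Complex.Gamma (z + 1))) *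
            ((1 - ‖x i‖ ^ 2 : ℝ) : ℂ) ^ z
        else 0)) :
    DifferentiableOn ℂ I {z : ℂ | -1 < z.re} := by
  obtain ⟨M, hM⟩ := hφ_bdd
  have hM0 : 0 ≤ M := le_trans (abs_nonneg _) (hM fun _ => 0)
  set S : Set ℂ := {z : ℂ | -1 < z.re} with hSdef
  set c : ℂ → ℂ := fun z => Complex.Gamma ((d:ℂ)/2 + z + 1) /
      ((Real.pi:ℂ) ^ ((d:ℂ)/2) * Complex.Gamma (z+1)) with hcdef
  have hSopen : IsOpen S := isOpen_lt continuous_const Complex.continuous_re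
  have hπ : ((Real.pi:ℂ)) ^ ((d:ℂ)/2) ≠ 0 := by
    rw [Complex.cpow_def_of_ne_zero (by exact_mod_cast Real.pi_ne_zero)]
    exact Complex.exp_ne_zero _
  have hdre : ((d:ℂ)/2).re = (d:ℝ)/2 := by
    have h : ((d:ℂ)/2) = (((d:ℝ)/2 : ℝ) : ℂ) := by push_cast; ring
    rw [h, Complex.ofReal_re]
  have hne : ∀ (w : ℂ), 0 < w.re → ∀ m : ℕ, w ≠ -m := by
    intro w hw m hmw
    rw [hmw] at hw
    simp only [Complex.neg_re, Complex.natCast_re] at hw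
    have : (0:ℝ) ≤ m := Nat.cast_nonneg m
    linarith
  have hcdiff : ∀ z : ℂ, -1 < z.re → DifferentiableAt ℂ c z := by
    intro z hz
    have hre1 : (0:ℝ) < ((d:ℂ)/2 + z + 1).re := by
      simp only [Complex.add_re, Complex.one_re, hdre]
      have : (0:ℝ) ≤ (d:ℝ) := Nat.cast_nonneg d
      linarith
    have hre2 : (0:ℝ) < (z + 1).re := by
      simp only [Complex.add_re, Complex.one_re]; linarith
    have h1 : DifferentiableAt ℂ (fun w => Complex.Gamma ((d:ℂ)/2 + w + 1)) z :=
      (Complex.differentiableAt_Gamma _ (hne _ hre1)).comp z (by fun_prop)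
    have h2 : DifferentiableAt ℂ (fun w => Complex.Gamma (w + 1)) z :=
      (Complex.differentiableAt_Gamma _ (hne _ hre2)).comp z (by fun_prop)
    exact h1.div ((differentiableAt_const _).mul h2)
      (mul_ne_zero hπ (Complex.Gamma_ne_zero_of_re_pos hre2))
  have hcan : AnalyticOnNhd ℂ c S :=
    DifferentiableOn.analyticOnNhd (fun z hz => (hcdiff z hz).differentiableWithinAt) hSopen
  -- rewrite I
  intro z₀ hz₀
  have hz₀re : -1 < z₀.re := hz₀
  apply DifferentiableAt.differentiableWithinAt
  set ε : ℝ := (z₀.re + 1)/2 with hεdef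
  have hε : 0 < ε := by simp only [hεdef]; linarith
  set r₀ : ℝ := z₀.re - ε with hr₀def
  have hr₀ : -1 < r₀ := by simp only [hr₀def, hεdef]; linarith
  set δ : ℝ := (r₀ + 1)/2 with hδdef
  have hδ : 0 < δ := by simp only [hδdef]; linarith
  set r₁ : ℝ := r₀ - δ with hr₁def
  have hr₁ : -1 < r₁ := by simp only [hr₁def, hδdef]; linarith
  have hr₁r₀ : r₁ ≤ r₀ := by simp only [hr₁def]; linarith
  have hsub : Metric.closedBall z₀ ε ⊆ S := by
    intro z hz
    have h1 : |(z - z₀).re| ≤ dist z z₀ := by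
      rw [Complex.dist_eq]; exact Complex.abs_re_le_norm _
    rw [Complex.sub_re, abs_le] at h1
    have := mem_closedBall.1 hz
    show -1 < z.re
    linarith [h1.1]
  have hrele : ∀ z ∈ Metric.closedBall z₀ ε, r₀ ≤ z.re := by
    intro z hz
    have h1 : |(z - z₀).re| ≤ dist z z₀ := by
      rw [Complex.dist_eq]; exact Complex.abs_re_le_norm _
    rw [Complex.sub_re, abs_le] at h1
    have := mem_closedBall.1 hz
    simp only [hr₀def]
    linarith [h1.1]
  obtain ⟨C, hC⟩ := (isCompact_closedBall z₀ ε).exists_bound_of_continuousOn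
    (fun z hz => ((hcdiff z (hsub hz)).continuousAt).continuousWithinAt)
  obtain ⟨C', hC'⟩ := (isCompact_closedBall z₀ ε).exists_bound_of_continuousOn
    ((hcan.deriv.continuousOn).mono hsub)
  have hC0 : 0 ≤ C := le_trans (norm_nonneg _) (hC z₀ (mem_closedBall_self hε.le))
  have hC'0 : 0 ≤ C' := le_trans (norm_nonneg _) (hC' z₀ (mem_closedBall_self hε.le))
  set K : ℝ := C' + C/δ with hKdef
  have hK0 : 0 ≤ K := by positivity
  -- the exp-form factors
  set L : (EuclideanSpace ℝ (Fin d)) → ℂ := fun y => ((Real.log (1 - ‖y‖^2) : ℝ) : ℂ) with hLdef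
  set g : ℂ → (EuclideanSpace ℝ (Fin d)) → ℂ := fun z y => if ‖y‖ < 1 then c z * Complex.exp (L y * z) else 0 with hgdef
  set g' : ℂ → (EuclideanSpace ℝ (Fin d)) → ℂ := fun z y => if ‖y‖ < 1 then
      deriv c z * Complex.exp (L y * z) + c z * (Complex.exp (L y * z) * L y) else 0 with hg'def
  set w1 : (EuclideanSpace ℝ (Fin d)) → ℝ := fun y => if ‖y‖ < 1 then (1 - ‖y‖^2) ^ r₁ else 0 with hw1def
  have hw1nonneg : ∀ y, 0 ≤ w1 y := by
    intro y; simp only [hw1def]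
    split
    · apply Real.rpow_nonneg; nlinarith [norm_nonneg y]
    · exact le_refl 0
  have hRpos : ∀ y : (EuclideanSpace ℝ (Fin d)), ‖y‖ < 1 → 0 < 1 - ‖y‖^2 := fun y hy => by nlinarith [norm_nonneg y]
  have hRle : ∀ y : (EuclideanSpace ℝ (Fin d)), 1 - ‖y‖^2 ≤ 1 := fun y => by nlinarith [norm_nonneg y]
  have hexp_norm : ∀ (y : (EuclideanSpace ℝ (Fin d))) (z : ℂ), ‖y‖ < 1 →
      ‖Complex.exp (L y * z)‖ = (1 - ‖y‖^2) ^ z.re := by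
    intro y z hy
    rw [Complex.norm_exp, Real.rpow_def_of_pos (hRpos y hy)]
    congr 1
    simp [hLdef, Complex.mul_re]
  have hrpow_mono : ∀ y : (EuclideanSpace ℝ (Fin d)), ‖y‖ < 1 → ∀ {t : ℝ}, r₁ ≤ t →
      (1-‖y‖^2) ^ t ≤ (1-‖y‖^2) ^ r₁ := fun y hy t ht =>
    Real.rpow_le_rpow_of_exponent_ge (hRpos y hy) (hRle y) ht
  have hgb : ∀ z ∈ Metric.closedBall z₀ ε, ∀ y : (EuclideanSpace ℝ (Fin d)), ‖g z y‖ ≤ C * w1 y := by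
    intro z hz y
    by_cases hy : ‖y‖ < 1
    · simp only [hgdef, hw1def, if_pos hy]
      rw [norm_mul, hexp_norm y z hy]
      exact mul_le_mul (hC z hz) (hrpow_mono y hy (hr₁r₀.trans (hrele z hz)))
        (Real.rpow_nonneg (hRpos y hy).le _) hC0
    · simp [hgdef, hw1def, if_neg hy]
  have hg'b : ∀ z ∈ Metric.closedBall z₀ ε, ∀ y : (EuclideanSpace ℝ (Fin d)), ‖g' z y‖ ≤ K * w1 y := by
    intro z hz y
    by_cases hy : ‖y‖ < 1
    · simp only [hg'def, hw1def, if_pos hy]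
      have hR := hRpos y hy
      have hL : ‖L y‖ ≤ (1-‖y‖^2) ^ (-δ) / δ := by
        simp only [hLdef, Complex.norm_real, Real.norm_eq_abs]
        exact logBound hδ hR (hRle y)
      have e1 : ‖deriv c z * Complex.exp (L y * z)‖ ≤ C' * (1-‖y‖^2) ^ r₁ := by
        rw [norm_mul, hexp_norm y z hy]
        exact mul_le_mul (hC' z hz) (hrpow_mono y hy (hr₁r₀.trans (hrele z hz)))
          (Real.rpow_nonneg hR.le _) hC'0
      have e2 : ‖c z * (Complex.exp (L y * z) * L y)‖ ≤ (C/δ) * (1-‖y‖^2) ^ r₁ := by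
        rw [norm_mul, norm_mul, hexp_norm y z hy]
        have h3 : (1-‖y‖^2) ^ z.re * ‖L y‖ ≤ (1-‖y‖^2) ^ r₀ * ((1-‖y‖^2) ^ (-δ) / δ) :=
          mul_le_mul (Real.rpow_le_rpow_of_exponent_ge hR (hRle y) (hrele z hz)) hL
            (norm_nonneg _) (Real.rpow_nonneg hR.le _)
        have h4 : (1-‖y‖^2) ^ r₀ * ((1-‖y‖^2) ^ (-δ) / δ) = (1-‖y‖^2) ^ r₁ / δ := by
          rw [mul_div_assoc', ← Real.rpow_add hR]
          congr 2
        calc ‖c z‖ * ((1-‖y‖^2) ^ z.re * ‖L y‖)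
            ≤ C * ((1-‖y‖^2) ^ r₁ / δ) := by
              rw [← h4]
              exact mul_le_mul (hC z hz) h3 (mul_nonneg (Real.rpow_nonneg hR.le _)
                (norm_nonneg _)) hC0
          _ = (C/δ) * (1-‖y‖^2) ^ r₁ := by ring
      calc ‖deriv c z * Complex.exp (L y * z) + c z * (Complex.exp (L y * z) * L y)‖
          ≤ C' * (1-‖y‖^2) ^ r₁ + (C/δ) * (1-‖y‖^2) ^ r₁ :=
            (norm_add_le _ _).trans (add_le_add e1 e2)
        _ = K * (1-‖y‖^2) ^ r₁ := by rw [hKdef]; ring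
    · simp [hg'def, hw1def, if_neg hy]
  have hgd : ∀ (y : (EuclideanSpace ℝ (Fin d))), ∀ z ∈ Metric.ball z₀ ε, HasDerivAt (fun w => g w y) (g' z y) z := by
    intro y z hz
    by_cases hy : ‖y‖ < 1
    · simp only [hgdef, hg'def, if_pos hy]
      have h1 : HasDerivAt (fun w => Complex.exp (L y * w)) (Complex.exp (L y * z) * L y) z := by
        simpa using ((hasDerivAt_id z).const_mul (L y)).cexp
      have h2 : HasDerivAt c (deriv c z) z :=
        (hcdiff z (hsub (Metric.ball_subset_closedBall hz))).hasDerivAt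
      exact h2.mul h1
    · simp only [hgdef, hg'def, if_neg hy]
      exact hasDerivAt_const z 0
  have hgm : ∀ z, Measurable (g z) := by
    intro z
    apply Measurable.ite (measurableSet_lt (by fun_prop) measurable_const) _ measurable_const
    apply Measurable.const_mul
    apply Complex.measurable_exp.comp
    apply Measurable.mul_const
    exact Complex.measurable_ofReal.comp (Real.measurable_log.comp (by fun_prop))
  have hg'm : ∀ z, Measurable (g' z) := by
    intro z
    apply Measurable.ite (measurableSet_lt (by fun_prop) measurable_const) _ measurable_const
    have hLm : Measurable L :=
      Complex.measurable_ofReal.comp (Real.measurable_log.comp (by fun_prop))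
    have he : Measurable (fun y => Complex.exp (L y * z)) :=
      Complex.measurable_exp.comp (hLm.mul_const z)
    exact (he.const_mul _).add ((he.mul hLm).const_mul _)
  set piS : Set (Fin n → (EuclideanSpace ℝ (Fin d))) := Set.univ.pi fun _ : Fin n => Metric.closedBall (0:(EuclideanSpace ℝ (Fin d))) 1
    with hpiS
  have hpiMeas : MeasurableSet piS := MeasurableSet.univ_pi fun i => measurableSet_closedBall
  set μ : Measure (Fin n → (EuclideanSpace ℝ (Fin d))) := volume.restrict piS with hμdef
  set F : ℂ → (Fin n → (EuclideanSpace ℝ (Fin d))) → ℂ := fun z x => (φ x : ℂ) * ∏ i, g z (x i) with hFdef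
  set F' : ℂ → (Fin n → (EuclideanSpace ℝ (Fin d))) → ℂ := fun z x =>
    (φ x : ℂ) * ∑ i, (∏ j ∈ Finset.univ.erase i, g z (x j)) * g' z (x i) with hF'def
  have hW1prod : Integrable (fun x : Fin n → (EuclideanSpace ℝ (Fin d)) => ∏ j, w1 (x j)) :=
    Integrable.fintype_prod (f := fun _ : Fin n => w1) (fun i => ballInt_aux hr₁)
  have hFmeas : ∀ z, AEStronglyMeasurable (F z) μ := fun z =>
    (((Complex.measurable_ofReal.comp hφ_meas)).mul
      (Finset.measurable_prod Finset.univ fun i _ =>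
        (hgm z).comp (measurable_pi_apply i))).aestronglyMeasurable
  have hF'meas : ∀ z, AEStronglyMeasurable (F' z) μ := fun z =>
    (((Complex.measurable_ofReal.comp hφ_meas)).mul
      (Finset.measurable_sum Finset.univ fun i _ =>
        (Finset.measurable_prod _ fun j _ => (hgm z).comp (measurable_pi_apply j)).mul
          ((hg'm z).comp (measurable_pi_apply i)))).aestronglyMeasurable
  set B : (Fin n → (EuclideanSpace ℝ (Fin d))) → ℝ := fun x => (M * ((n:ℝ) * ((max C 1)^n * K))) * ∏ j, w1 (x j)
    with hBdef
  have hBint : Integrable B μ := (hW1prod.const_mul _).restrict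
  have hφnorm : ∀ x, ‖(φ x : ℂ)‖ ≤ M := by
    intro x; rw [Complex.norm_real, Real.norm_eq_abs]; exact hM x
  have h_bound : ∀ᵐ a ∂μ, ∀ z ∈ Metric.ball z₀ ε, ‖F' z a‖ ≤ B a := by
    refine Filter.Eventually.of_forall fun a z hz => ?_
    have hz' : z ∈ Metric.closedBall z₀ ε := Metric.ball_subset_closedBall hz
    have t2 : ‖∑ i, (∏ j ∈ Finset.univ.erase i, g z (a j)) * g' z (a i)‖
        ≤ (n:ℝ) * ((max C 1)^n * K * ∏ j, w1 (a j)) := by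
      calc ‖∑ i, (∏ j ∈ Finset.univ.erase i, g z (a j)) * g' z (a i)‖
          ≤ ∑ i, ‖(∏ j ∈ Finset.univ.erase i, g z (a j)) * g' z (a i)‖ :=
            norm_sum_le _ _
        _ ≤ ∑ _i : Fin n, (max C 1)^n * K * ∏ j, w1 (a j) := by
            apply Finset.sum_le_sum
            intro i _
            rw [norm_mul, norm_prod]
            exact prodBound (fun j => ‖g z (a j)‖) (fun j => ‖g' z (a j)‖)
              (fun j => w1 (a j)) C K hC0 hK0 (fun j => hw1nonneg _)
              (fun j => norm_nonneg _) (fun j => norm_nonneg _)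
              (fun j => hgb z hz' (a j)) (fun j => hg'b z hz' (a j)) i
        _ = (n:ℝ) * ((max C 1)^n * K * ∏ j, w1 (a j)) := by
            rw [Finset.sum_const, Finset.card_univ, Fintype.card_fin, nsmul_eq_mul]
    calc ‖F' z a‖ = ‖(φ a : ℂ)‖ * ‖∑ i, (∏ j ∈ Finset.univ.erase i, g z (a j)) * g' z (a i)‖ :=
          norm_mul _ _
      _ ≤ M * ((n:ℝ) * ((max C 1)^n * K * ∏ j, w1 (a j))) :=
          mul_le_mul (hφnorm a) t2 (norm_nonneg _) hM0
      _ = B a := by rw [hBdef]; ring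
  have hF_int : Integrable (F z₀) μ := by
    apply Integrable.mono' ((hW1prod.const_mul (M * (max C 1)^n)).restrict) (hFmeas z₀)
    refine Filter.Eventually.of_forall fun a => ?_
    have hz' : z₀ ∈ Metric.closedBall z₀ ε := Metric.mem_closedBall_self hε.le
    calc ‖F z₀ a‖ = ‖(φ a : ℂ)‖ * ‖∏ i, g z₀ (a i)‖ := norm_mul _ _
      _ ≤ M * ((max C 1)^n * ∏ j, w1 (a j)) := by
          apply mul_le_mul (hφnorm a) _ (norm_nonneg _) hM0
          rw [norm_prod]
          exact prodBound0 (fun j => ‖g z₀ (a j)‖) (fun j => w1 (a j)) C hC0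
            (fun j => hw1nonneg _) (fun j => norm_nonneg _) (fun j => hgb z₀ hz' (a j))
      _ = M * (max C 1)^n * ∏ j, w1 (a j) := by ring
  have h_diff : ∀ᵐ a ∂μ, ∀ z ∈ Metric.ball z₀ ε, HasDerivAt (F · a) (F' z a) z := by
    refine Filter.Eventually.of_forall fun a z hz => ?_
    have hp : HasDerivAt (fun w => ∏ i, g w (a i))
        (∑ i, (∏ j ∈ Finset.univ.erase i, g z (a j)) • g' z (a i)) z :=
      HasDerivAt.fun_finsetProd (fun i _ => hgd (a i) z hz)
    have := hp.const_mul ((φ a : ℂ))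
    simpa [hFdef, hF'def, smul_eq_mul] using this
  have main := hasDerivAt_integral_of_dominated_loc_of_deriv_le (Metric.ball_mem_nhds z₀ hε)
    (Filter.Eventually.of_forall fun z => hFmeas z) hF_int (hF'meas z₀) h_bound hBint h_diff
  have hIeq : I = fun z => ∫ a, F z a ∂μ := by
    funext z
    rw [hI z]
    apply integral_congr_ae
    refine Filter.Eventually.of_forall fun x => ?_
    have hfac : ∀ i : Fin n, (if ‖x i‖ < 1 then c z * ((1 - ‖x i‖ ^ 2 : ℝ) : ℂ) ^ z else 0)
        = g z (x i) := by
      intro i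
      by_cases hy : ‖x i‖ < 1
      · simp only [hgdef, if_pos hy]
        congr 1
        rw [Complex.cpow_def_of_ne_zero (Complex.ofReal_ne_zero.2 (ne_of_gt (hRpos _ hy))),
          ← Complex.ofReal_log (hRpos _ hy).le]
      · simp [hgdef, if_neg hy]
    simp only [hFdef]
    rw [Finset.prod_congr rfl fun i _ => hfac i]
  rw [hIeq]
  exact main.2.differentiableAt
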